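/- Let k = k_R + i k_I ∈ ℂ with k_R < 0, and let L = L_R + i L_I ∈ ℂ with L_R > 0, kL ≠ 2, kL̄ ≠ 2. Then |((1 + kL/2)/(1 - kL/2))·((1 + kL̄/2)/(1 - kL̄/2))| < 1. -/

import Mathlib

theorem stmt_11 (k L : ℂ) (hk : k.re < 0) (hL : 0 < L.re)
    (h1 : k * L ≠ 2) (h2 : k * (starRingEnd ℂ) L ≠ 2) :
    ‖(1 + k * L / 2) / (1 - k * L / 2) *
      ((1 + k * (starRingEnd ℂ) L / 2) / (1 - k * (starRingEnd ℂ) L / 2))‖ < 1 := by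
  have hd1 : (2 : ℂ) - k * L ≠ 0 := sub_ne_zero.mpr (Ne.symm h1)
  have hd2 : (2 : ℂ) - k * (starRingEnd ℂ) L ≠ 0 := sub_ne_zero.mpr (Ne.symm h2)
  have e : (1 + k * L / 2) / (1 - k * L / 2) *
      ((1 + k * (starRingEnd ℂ) L / 2) / (1 - k * (starRingEnd ℂ) L / 2)) =
      ((2 + k * L) * (2 + k * (starRingEnd ℂ) L)) /
      ((2 - k * L) * (2 - k * (starRingEnd ℂ) L)) := by
    field_simp
  rw [e, norm_div]
  have hden : 0 < ‖(2 - k * L) * (2 - k * (starRingEnd ℂ) L)‖ := by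
    simp [norm_pos_iff, hd1, hd2]
  rw [div_lt_one hden]
  refine lt_of_pow_lt_pow_left₀ 2 (norm_nonneg _) ?_
  rw [Complex.sq_norm, Complex.sq_norm]
  simp only [Complex.normSq_apply, Complex.add_re, Complex.add_im, Complex.sub_re,
    Complex.sub_im, Complex.mul_re, Complex.mul_im, Complex.conj_re, Complex.conj_im,
    Complex.re_ofNat, Complex.im_ofNat]
  nlinarith [mul_pos (mul_pos hL (neg_pos.mpr hk))
    (show (0:ℝ) < 4 + (k.re^2 + k.im^2) * (L.re^2 + L.im^2) by positivity),
    sq_nonneg (k.re*L.re), sq_nonneg (k.im*L.im), sq_nonneg k.re, sq_nonneg L.im]
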